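/- Let G be obtained from a 5-cycle with vertices u, v, x, y, z (in cyclic order uv xyz, with uv an edge maximizing degree-sum on the cycle) by attaching at least 2 pendant edges at every cycle vertex. If d(u) + d(v) ≥ d(x) + d(y) + d(z) − 3, then the strong chromatic index of G equals d(u) + d(v) − 1. -/

import Mathlib

open SimpleGraph

/-- Two edges of `G` are within distance at most 2: they share a vertex, or some edge of `G`
joins an endpoint of one to an endpoint of the other. -/
def EdgesNear {V : Type*} (G : SimpleGraph V) (e f : Sym2 V) : Prop :=
  (∃ x, x ∈ e ∧ x ∈ f) ∨ (∃ x y, x ∈ e ∧ y ∈ f ∧ G.Adj x y)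

/-- `c` assigns distinct colours to any two distinct edges of `G` at distance at most 2. -/
def IsStrongEdgeColoringOn {V : Type*} (G : SimpleGraph V) (c : Sym2 V → ℕ) : Prop :=
  ∀ e ∈ G.edgeSet, ∀ f ∈ G.edgeSet, e ≠ f → EdgesNear G e f → c e ≠ c f

/-- A strong edge-colouring of `G` with `k` colours. -/
def IsStrongEdgeColoring {V : Type*} (G : SimpleGraph V) (k : ℕ) (c : Sym2 V → ℕ) : Prop :=
  (∀ e ∈ G.edgeSet, c e < k) ∧ IsStrongEdgeColoringOn G c

/-- The strong chromatic index of `G`. -/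
noncomputable def sci {V : Type*} (G : SimpleGraph V) : ℕ :=
  sInf {k | ∃ c : Sym2 V → ℕ, IsStrongEdgeColoring G k c}

/-- Degree of a vertex (cardinality of its neighbour set). -/
noncomputable def sdeg {V : Type*} (G : SimpleGraph V) (v : V) : ℕ :=
  (G.neighborSet v).ncard

/-- The graph obtained from the cycle `C_n` (on vertices `Sum.inl i`, `i : Fin n`)
by attaching `p i` pendant edges at the cycle vertex `i` (the pendant neighbours of `i`
are the vertices `Sum.inr ⟨i, x⟩`). -/
def pufferGraph (n : ℕ) (p : Fin n → ℕ) :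
    SimpleGraph (Fin n ⊕ Σ i : Fin n, Fin (p i)) :=
  SimpleGraph.fromRel (fun a b =>
    (∃ i j : Fin n, a = Sum.inl i ∧ b = Sum.inl j ∧ (SimpleGraph.cycleGraph n).Adj i j) ∨
    (∃ (i : Fin n) (x : Fin (p i)), a = Sum.inl i ∧ b = Sum.inr ⟨i, x⟩))

open SimpleGraph

section
variable (p : Fin 5 → ℕ)

lemma fin5_cancel {j a b : Fin 5} (h : j + a = j + b) : a = b := by
  have := congrArg (fun t => t - j) h
  simpa [add_comm, add_sub_cancel_right] using this

lemma fin5_self_ne_add_one {i : Fin 5} : i ≠ i + 1 := by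
  intro h'
  have h0 : i + 0 = i + 1 := by simpa using h'
  exact absurd (fin5_cancel h0) (by decide)

lemma puffer_adj_inl_inl {i j : Fin 5} :
    (pufferGraph 5 p).Adj (.inl i) (.inl j) ↔ j = i + 1 ∨ i = j + 1 := by
  simp only [pufferGraph, fromRel_adj]
  constructor
  · rintro ⟨hne, (⟨a, b, ha, hb, hab⟩ | ⟨a, x, ha, hb⟩) |
      (⟨a, b, hb, ha, hab⟩ | ⟨a, x, ha, hb⟩)⟩
    · cases Sum.inl.inj ha; cases Sum.inl.inj hb
      rcases cycleGraph_adj.mp hab with h' | h'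
      · exact Or.inr (by rwa [sub_eq_iff_eq_add'] at h')
      · exact Or.inl (by rwa [sub_eq_iff_eq_add'] at h')
    · exact absurd hb (by simp)
    · cases Sum.inl.inj ha; cases Sum.inl.inj hb
      rcases cycleGraph_adj.mp hab with h' | h'
      · exact Or.inl (by rwa [sub_eq_iff_eq_add'] at h')
      · exact Or.inr (by rwa [sub_eq_iff_eq_add'] at h')
    · exact absurd hb (by simp)
  · intro hor
    refine ⟨?_, Or.inl (Or.inl ⟨i, j, rfl, rfl, cycleGraph_adj.mpr ?_⟩)⟩
    · rintro h; cases Sum.inl.inj h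
      rcases hor with h' | h' <;> exact fin5_self_ne_add_one h'
    · rcases hor with h' | h'
      · exact Or.inr (by rw [h']; simp)
      · exact Or.inl (by rw [h']; simp)

lemma puffer_adj_inl_inr {i : Fin 5} {s : Σ i : Fin 5, Fin (p i)} :
    (pufferGraph 5 p).Adj (.inl i) (.inr s) ↔ s.1 = i := by
  simp only [pufferGraph, fromRel_adj]
  constructor
  · rintro ⟨hne, (⟨a, b, ha, hb, hab⟩ | ⟨a, x, ha, hb⟩) |
      (⟨a, b, ha, hb, hab⟩ | ⟨a, x, ha, hb⟩)⟩
    · exact absurd hb (by simp)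
    · cases Sum.inl.inj ha; cases Sum.inr.inj hb; rfl
    · exact absurd ha (by simp)
    · exact absurd hb (by simp)
  · rintro rfl
    exact ⟨by simp, Or.inl (Or.inr ⟨s.1, s.2, rfl, by simp⟩)⟩

lemma puffer_adj_inr_inr {s t : Σ i : Fin 5, Fin (p i)} :
    ¬ (pufferGraph 5 p).Adj (.inr s) (.inr t) := by
  simp only [pufferGraph, fromRel_adj]
  rintro ⟨hne, (⟨a, b, ha, hb, hab⟩ | ⟨a, x, ha, hb⟩) |
      (⟨a, b, ha, hb, hab⟩ | ⟨a, x, ha, hb⟩)⟩ <;> exact absurd ha (by simp)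

end
section
variable (p : Fin 5 → ℕ)

lemma puffer_edge_shape {e : Sym2 (Fin 5 ⊕ Σ i : Fin 5, Fin (p i))}
    (he : e ∈ (pufferGraph 5 p).edgeSet) :
    (∃ i : Fin 5, e = s(.inl i, .inl (i+1))) ∨
      ∃ (i : Fin 5) (x : Fin (p i)), e = s(.inl i, .inr ⟨i, x⟩) := by
  induction e using Sym2.ind with
  | _ a b =>
    rw [SimpleGraph.mem_edgeSet] at he
    match a, b with
    | .inl i, .inl j =>
      rcases (puffer_adj_inl_inl p).mp he with h | h
      · exact Or.inl ⟨i, by rw [h]⟩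
      · exact Or.inl ⟨j, by rw [h, Sym2.eq_swap]⟩
    | .inl i, .inr s =>
      have h := (puffer_adj_inl_inr p).mp he
      exact Or.inr ⟨s.1, s.2, by subst h; rfl⟩
    | .inr s, .inl i =>
      have h := (puffer_adj_inl_inr p).mp ((pufferGraph 5 p).adj_symm he)
      exact Or.inr ⟨s.1, s.2, by subst h; rw [Sym2.eq_swap]⟩
    | .inr s, .inr t => exact absurd he (puffer_adj_inr_inr p)

lemma neighborSet_inl (i : Fin 5) :
    (pufferGraph 5 p).neighborSet (.inl i) =
      ↑(({.inl (i+1), .inl (i-1)} : Finset (Fin 5 ⊕ Σ i : Fin 5, Fin (p i))) ∪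
        Finset.univ.image fun x : Fin (p i) => (.inr ⟨i,x⟩ : Fin 5 ⊕ Σ i : Fin 5, Fin (p i))) := by
  ext w
  simp only [SimpleGraph.mem_neighborSet, Finset.coe_union, Set.mem_union, Finset.coe_insert,
    Set.mem_insert_iff, Finset.coe_singleton, Set.mem_singleton_iff, Finset.coe_image,
    Finset.coe_univ, Set.image_univ, Set.mem_range]
  match w with
  | .inl j =>
    rw [puffer_adj_inl_inl]
    constructor
    · rintro (h | h)
      · exact Or.inl (Or.inl (by rw [h]))
      · exact Or.inl (Or.inr (by rw [h]; simp))
    · rintro ((h | h) | ⟨x, h⟩)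
      · exact Or.inl (by exact Sum.inl.inj h)
      · exact Or.inr (by rw [Sum.inl.inj h]; simp)
      · cases h
  | .inr s =>
    rw [puffer_adj_inl_inr]
    constructor
    · intro h
      exact Or.inr ⟨(show s.1 = i from h) ▸ s.2, by subst h; rfl⟩
    · rintro ((h | h) | ⟨x, h⟩)
      · cases h
      · cases h
      · cases Sum.inr.inj h; rfl

lemma sdeg_inl (i : Fin 5) : sdeg (pufferGraph 5 p) (.inl i) = p i + 2 := by
  rw [sdeg, neighborSet_inl, Set.ncard_coe_finset, Finset.card_union_of_disjoint, Finset.card_pair,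
    Finset.card_image_of_injective _ (fun x y hxy => by
      cases Sum.inr.inj hxy; rfl), Finset.card_univ, Fintype.card_fin]
  · omega
  · intro h
    have : (1 : Fin 5) = -1 := fin5_cancel (show i + 1 = i + (-1) by
      rw [← sub_eq_add_neg]; exact Sum.inl.inj h)
    exact absurd this (by decide)
  · simp [Finset.disjoint_left]
end
def pcol (p : Fin 5 → ℕ) (j : Fin 5) (x : ℕ) : ℕ :=
  if j.val = 0 then (if x = 0 then 2 else x + 4)
  else if j.val = 1 then (if x = 0 then 3 else p 0 + 3 + x)
  else if j.val = 2 then (if x = 0 then 4 else x + 4)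
  else if j.val = 3 then
    (if x = 0 then 0 else if x ≤ p 0 - p 2 then p 2 + 3 + x else p 2 + p 4 + 2 + x)
  else (if x = 0 then 1 else p 0 + 3 + x)

lemma pcol0 (p : Fin 5 → ℕ) (x : ℕ) : pcol p 0 x = if x = 0 then 2 else x + 4 := rfl
lemma pcol1 (p : Fin 5 → ℕ) (x : ℕ) : pcol p 1 x = if x = 0 then 3 else p 0 + 3 + x := rfl
lemma pcol2 (p : Fin 5 → ℕ) (x : ℕ) : pcol p 2 x = if x = 0 then 4 else x + 4 := rfl
lemma pcol3 (p : Fin 5 → ℕ) (x : ℕ) : pcol p 3 x =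
    if x = 0 then 0 else if x ≤ p 0 - p 2 then p 2 + 3 + x else p 2 + p 4 + 2 + x := rfl
lemma pcol4 (p : Fin 5 → ℕ) (x : ℕ) : pcol p 4 x = if x = 0 then 1 else p 0 + 3 + x := rfl

section
variable {p : Fin 5 → ℕ} (hp : ∀ i, 2 ≤ p i) (h20 : p 2 ≤ p 0) (h41 : p 4 ≤ p 1)
  (hsum : p 2 + p 3 + p 4 ≤ p 0 + p 1 + 1)

include hp h20 h41 hsum

lemma pcol_lt {j : Fin 5} {x : ℕ} (hx : x < p j) : pcol p j x < p 0 + p 1 + 3 := by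
  have h0 := hp 0; have h1 := hp 1; have h2 := hp 2; have h3 := hp 3; have h4 := hp 4
  fin_cases j
  · replace hx : x < p 0 := hx
    show pcol p 0 x < p 0 + p 1 + 3
    rw [pcol0]; split_ifs <;> omega
  · replace hx : x < p 1 := hx
    show pcol p 1 x < p 0 + p 1 + 3
    rw [pcol1]; split_ifs <;> omega
  · replace hx : x < p 2 := hx
    show pcol p 2 x < p 0 + p 1 + 3
    rw [pcol2]; split_ifs <;> omega
  · replace hx : x < p 3 := hx
    show pcol p 3 x < p 0 + p 1 + 3
    rw [pcol3]; split_ifs <;> omega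
  · replace hx : x < p 4 := hx
    show pcol p 4 x < p 0 + p 1 + 3
    rw [pcol4]; split_ifs <;> omega

lemma pcol_inj {j : Fin 5} {x x' : ℕ} (hx : x < p j) (hx' : x' < p j) (hne : x ≠ x') :
    pcol p j x ≠ pcol p j x' := by
  have h0 := hp 0; have h1 := hp 1; have h2 := hp 2; have h3 := hp 3; have h4 := hp 4
  fin_cases j
  · replace hx : x < p 0 := hx
    replace hx' : x' < p 0 := hx'
    show pcol p 0 x ≠ pcol p 0 x'
    rw [pcol0, pcol0]; split_ifs <;> omega
  · replace hx : x < p 1 := hx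
    replace hx' : x' < p 1 := hx'
    show pcol p 1 x ≠ pcol p 1 x'
    rw [pcol1, pcol1]; split_ifs <;> omega
  · replace hx : x < p 2 := hx
    replace hx' : x' < p 2 := hx'
    show pcol p 2 x ≠ pcol p 2 x'
    rw [pcol2, pcol2]; split_ifs <;> omega
  · replace hx : x < p 3 := hx
    replace hx' : x' < p 3 := hx'
    show pcol p 3 x ≠ pcol p 3 x'
    rw [pcol3, pcol3]; split_ifs <;> omega
  · replace hx : x < p 4 := hx
    replace hx' : x' < p 4 := hx'
    show pcol p 4 x ≠ pcol p 4 x'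
    rw [pcol4, pcol4]; split_ifs <;> omega

lemma pcol_adj_disj {j : Fin 5} {x x' : ℕ} (hx : x < p j) (hx' : x' < p (j + 1)) :
    pcol p j x ≠ pcol p (j + 1) x' := by
  have h0 := hp 0; have h1 := hp 1; have h2 := hp 2; have h3 := hp 3; have h4 := hp 4
  fin_cases j
  · replace hx : x < p 0 := hx
    replace hx' : x' < p 1 := hx'
    show pcol p 0 x ≠ pcol p 1 x'
    rw [pcol0, pcol1]; split_ifs <;> omega
  · replace hx : x < p 1 := hx
    replace hx' : x' < p 2 := hx'
    show pcol p 1 x ≠ pcol p 2 x'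
    rw [pcol1, pcol2]; split_ifs <;> omega
  · replace hx : x < p 2 := hx
    replace hx' : x' < p 3 := hx'
    show pcol p 2 x ≠ pcol p 3 x'
    rw [pcol2, pcol3]; split_ifs <;> omega
  · replace hx : x < p 3 := hx
    replace hx' : x' < p 4 := hx'
    show pcol p 3 x ≠ pcol p 4 x'
    rw [pcol3, pcol4]; split_ifs <;> omega
  · replace hx : x < p 4 := hx
    replace hx' : x' < p 0 := hx'
    show pcol p 4 x ≠ pcol p 0 x'
    rw [pcol4, pcol0]; split_ifs <;> omega

omit h20 h41 hsum in
lemma pcol_eq_cycle {j i : Fin 5} {x : ℕ} (hx : x < p j) (hcol : pcol p j x = i.val) :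
    i = j + 2 := by
  have h0 := hp 0; have h1 := hp 1; have h2 := hp 2; have h3 := hp 3; have h4 := hp 4
  have hi : i.val < 5 := i.isLt
  fin_cases j
  · replace hx : x < p 0 := hx
    replace hcol : pcol p 0 x = i.val := hcol
    show i = (2 : Fin 5)
    rw [pcol0] at hcol
    refine Fin.ext ?_
    show i.val = 2
    split_ifs at hcol <;> omega
  · replace hx : x < p 1 := hx
    replace hcol : pcol p 1 x = i.val := hcol
    show i = (3 : Fin 5)
    rw [pcol1] at hcol
    refine Fin.ext ?_
    show i.val = 3
    split_ifs at hcol <;> omega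
  · replace hx : x < p 2 := hx
    replace hcol : pcol p 2 x = i.val := hcol
    show i = (4 : Fin 5)
    rw [pcol2] at hcol
    refine Fin.ext ?_
    show i.val = 4
    split_ifs at hcol <;> omega
  · replace hx : x < p 3 := hx
    replace hcol : pcol p 3 x = i.val := hcol
    show i = (0 : Fin 5)
    rw [pcol3] at hcol
    refine Fin.ext ?_
    show i.val = 0
    split_ifs at hcol <;> omega
  · replace hx : x < p 4 := hx
    replace hcol : pcol p 4 x = i.val := hcol
    show i = (1 : Fin 5)
    rw [pcol4] at hcol
    refine Fin.ext ?_
    show i.val = 1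
    split_ifs at hcol <;> omega

end
section
variable (p : Fin 5 → ℕ)

def ecol : (Fin 5 ⊕ Σ i : Fin 5, Fin (p i)) → (Fin 5 ⊕ Σ i : Fin 5, Fin (p i)) → ℕ
  | .inl i, .inl j => if j = i + 1 then i.val else if i = j + 1 then j.val else 0
  | .inl _, .inr s => pcol p s.1 s.2.val
  | .inr s, .inl _ => pcol p s.1 s.2.val
  | .inr _, .inr _ => 0

lemma ecol_symm : ∀ a b, ecol p a b = ecol p b a := by
  rintro (i | s) (j | t) <;> simp only [ecol]
  split_ifs with h1 h2 h2
  · exfalso; rw [h2] at h1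
    exact absurd h1 ((by decide : ∀ j : Fin 5, ¬j = j + 1 + 1) j)
  · rfl
  · rfl
  · rfl

noncomputable def scol : Sym2 (Fin 5 ⊕ Σ i : Fin 5, Fin (p i)) → ℕ :=
  Sym2.lift ⟨ecol p, ecol_symm p⟩

lemma scol_cycle (i : Fin 5) : scol p s(.inl i, .inl (i+1)) = i.val := by
  simp [scol, ecol]

lemma scol_pend (j : Fin 5) (x : Fin (p j)) : scol p s(.inl j, .inr ⟨j, x⟩) = pcol p j x.val := by
  simp [scol, ecol]

lemma edgesNear_symm {V : Type*} {G : SimpleGraph V} {e f : Sym2 V}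
    (h : EdgesNear G e f) : EdgesNear G f e := by
  rcases h with ⟨w, h1, h2⟩ | ⟨w1, w2, h1, h2, hadj⟩
  · exact Or.inl ⟨w, h2, h1⟩
  · exact Or.inr ⟨w2, w1, h2, h1, hadj.symm⟩

lemma not_near_cycle_pend (j : Fin 5) (x : Fin (p j)) :
    ¬ EdgesNear (pufferGraph 5 p) s(.inl (j+2), .inl (j+3)) s(.inl j, .inr ⟨j, x⟩) := by
  rintro (⟨w, hw1, hw2⟩ | ⟨w1, w2, h1, h2, hadj⟩)
  · rw [Sym2.mem_iff] at hw1 hw2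
    rcases hw1 with rfl | rfl <;> rcases hw2 with h | h
    · exact absurd (Sum.inl.inj h) ((by decide : ∀ j : Fin 5, ¬(j + 2 = j)) j)
    · cases h
    · exact absurd (Sum.inl.inj h) ((by decide : ∀ j : Fin 5, ¬(j + 3 = j)) j)
    · cases h
  · rw [Sym2.mem_iff] at h1 h2
    rcases h1 with rfl | rfl <;> rcases h2 with rfl | rfl
    · rcases (puffer_adj_inl_inl p).mp hadj with h | h
      · exact absurd h ((by decide : ∀ j : Fin 5, ¬j = j + 2 + 1) j)
      · exact absurd h ((by decide : ∀ j : Fin 5, ¬(j + 2 = j + 1)) j)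
    · have h' : j = j + 2 := (puffer_adj_inl_inr p).mp hadj
      exact absurd h' ((by decide : ∀ j : Fin 5, ¬j = j + 2) j)
    · rcases (puffer_adj_inl_inl p).mp hadj with h | h
      · exact absurd h ((by decide : ∀ j : Fin 5, ¬j = j + 3 + 1) j)
      · exact absurd h ((by decide : ∀ j : Fin 5, ¬(j + 3 = j + 1)) j)
    · have h' : j = j + 3 := (puffer_adj_inl_inr p).mp hadj
      exact absurd h' ((by decide : ∀ j : Fin 5, ¬j = j + 3) j)

lemma near_pend_pend {j j' : Fin 5} {x : Fin (p j)} {x' : Fin (p j')}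
    (h : EdgesNear (pufferGraph 5 p) s(.inl j, .inr ⟨j, x⟩) s(.inl j', .inr ⟨j', x'⟩)) :
    j = j' ∨ j' = j + 1 ∨ j = j' + 1 := by
  rcases h with ⟨w, hw1, hw2⟩ | ⟨w1, w2, h1, h2, hadj⟩
  · rw [Sym2.mem_iff] at hw1 hw2
    rcases hw1 with rfl | rfl <;> rcases hw2 with h | h
    · exact Or.inl (Sum.inl.inj h)
    · cases h
    · cases h
    · exact Or.inl (congrArg Sigma.fst (Sum.inr.inj h))
  · rw [Sym2.mem_iff] at h1 h2
    rcases h1 with rfl | rfl <;> rcases h2 with rfl | rfl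
    · rcases (puffer_adj_inl_inl p).mp hadj with h | h
      · exact Or.inr (Or.inl h)
      · exact Or.inr (Or.inr h)
    · exact Or.inl ((puffer_adj_inl_inr p).mp hadj).symm
    · exact Or.inl ((puffer_adj_inl_inr p).mp ((pufferGraph 5 p).adj_symm hadj))
    · exact absurd hadj (puffer_adj_inr_inr p)

end
section
variable {p : Fin 5 → ℕ} (hp : ∀ i, 2 ≤ p i) (h20 : p 2 ≤ p 0) (h41 : p 4 ≤ p 1)
  (hsum : p 2 + p 3 + p 4 ≤ p 0 + p 1 + 1)

include hp h20 h41 hsum in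
lemma scol_cyc_pend_ne {i j : Fin 5} {x : Fin (p j)}
    (hnear : EdgesNear (pufferGraph 5 p) s(.inl i, .inl (i+1)) s(.inl j, .inr ⟨j, x⟩)) :
    scol p s(.inl i, .inl (i+1)) ≠ scol p s(.inl j, .inr ⟨j, x⟩) := by
  rw [scol_cycle, scol_pend]
  intro hval
  have hij : i = j + 2 := pcol_eq_cycle hp x.isLt hval.symm
  subst hij
  rw [show (j + 2) + 1 = j + 3 by rw [add_assoc]; rfl] at hnear
  exact not_near_cycle_pend p j x hnear

include hp h20 h41 hsum in
theorem scol_strong : IsStrongEdgeColoring (pufferGraph 5 p) (p 0 + p 1 + 3) (scol p) := by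
  constructor
  · intro e he
    rcases puffer_edge_shape p he with ⟨i, rfl⟩ | ⟨j, x, rfl⟩
    · rw [scol_cycle]
      have := i.isLt; have := hp 0; have := hp 1
      omega
    · rw [scol_pend]
      exact pcol_lt hp h20 h41 hsum x.isLt
  · intro e he f hf hne hnear
    rcases puffer_edge_shape p he with ⟨i, rfl⟩ | ⟨j, x, rfl⟩ <;>
      rcases puffer_edge_shape p hf with ⟨i', rfl⟩ | ⟨j', x', rfl⟩
    · rw [scol_cycle, scol_cycle]
      intro hval
      exact hne (by rw [Fin.ext hval])
    · exact scol_cyc_pend_ne hp h20 h41 hsum hnear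
    · intro hval
      exact scol_cyc_pend_ne hp h20 h41 hsum (edgesNear_symm hnear) hval.symm
    · rw [scol_pend, scol_pend]
      by_cases hjj : j = j'
      · subst hjj
        have hxx : x ≠ x' := by rintro rfl; exact hne rfl
        exact pcol_inj hp h20 h41 hsum x.isLt x'.isLt (fun hv => hxx (Fin.ext hv))
      · rcases near_pend_pend p hnear with hjj' | hjj' | hjj'
        · exact absurd hjj' hjj
        · subst hjj'
          exact pcol_adj_disj hp h20 h41 hsum x.isLt x'.isLt
        · subst hjj'
          exact (pcol_adj_disj hp h20 h41 hsum x'.isLt x.isLt).symm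

include hp in
lemma sci_lower {m : ℕ} (hm : ∃ c, IsStrongEdgeColoring (pufferGraph 5 p) m c) :
    p 0 + p 1 + 3 ≤ m := by
  classical
  obtain ⟨c, hbound, hstrong⟩ := hm
  have adj01 : (pufferGraph 5 p).Adj (.inl 0) (.inl 1) :=
    (puffer_adj_inl_inl p).mpr (Or.inl (by decide))
  have adj04 : (pufferGraph 5 p).Adj (.inl 0) (.inl 4) :=
    (puffer_adj_inl_inl p).mpr (Or.inr (by decide))
  have adj12 : (pufferGraph 5 p).Adj (.inl 1) (.inl 2) :=
    (puffer_adj_inl_inl p).mpr (Or.inl (by decide))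
  let S : Finset (Sym2 (Fin 5 ⊕ Σ i : Fin 5, Fin (p i))) :=
    (Finset.univ.image fun x : Fin (p 0) => s(Sum.inl 0, Sum.inr ⟨0, x⟩)) ∪
    (Finset.univ.image fun x : Fin (p 1) => s(Sum.inl 1, Sum.inr ⟨1, x⟩)) ∪
    {s(Sum.inl 0, Sum.inl 1), s(Sum.inl 0, Sum.inl 4), s(Sum.inl 1, Sum.inl 2)}
  have hS : ∀ e ∈ S, e ∈ (pufferGraph 5 p).edgeSet ∧
      ((Sum.inl 0 : Fin 5 ⊕ Σ i : Fin 5, Fin (p i)) ∈ e ∨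
        (Sum.inl 1 : Fin 5 ⊕ Σ i : Fin 5, Fin (p i)) ∈ e) := by
    intro e he
    simp only [S, Finset.mem_union, Finset.mem_image, Finset.mem_univ, true_and,
      Finset.mem_insert, Finset.mem_singleton] at he
    rcases he with (⟨x, rfl⟩ | ⟨x, rfl⟩) | rfl | rfl | rfl
    · exact ⟨(SimpleGraph.mem_edgeSet _).mpr ((puffer_adj_inl_inr p).mpr rfl),
        Or.inl (Sym2.mem_mk_left _ _)⟩
    · exact ⟨(SimpleGraph.mem_edgeSet _).mpr ((puffer_adj_inl_inr p).mpr rfl),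
        Or.inr (Sym2.mem_mk_left _ _)⟩
    · exact ⟨(SimpleGraph.mem_edgeSet _).mpr adj01, Or.inl (Sym2.mem_mk_left _ _)⟩
    · exact ⟨(SimpleGraph.mem_edgeSet _).mpr adj04, Or.inl (Sym2.mem_mk_left _ _)⟩
    · exact ⟨(SimpleGraph.mem_edgeSet _).mpr adj12, Or.inr (Sym2.mem_mk_left _ _)⟩
  have hnearS : ∀ e ∈ S, ∀ f ∈ S, EdgesNear (pufferGraph 5 p) e f := by
    intro e he f hf
    rcases (hS e he).2 with h1 | h1 <;> rcases (hS f hf).2 with h2 | h2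
    · exact Or.inl ⟨_, h1, h2⟩
    · exact Or.inr ⟨_, _, h1, h2, adj01⟩
    · exact Or.inr ⟨_, _, h1, h2, adj01.symm⟩
    · exact Or.inl ⟨_, h1, h2⟩
  have hinj0 : Function.Injective
      (fun x : Fin (p 0) => (s(Sum.inl 0, Sum.inr ⟨0, x⟩) : Sym2 (Fin 5 ⊕ Σ i : Fin 5, Fin (p i)))) := by
    intro a b hab
    simp only [Sym2.eq_iff] at hab
    rcases hab with ⟨-, h2⟩ | ⟨h2, -⟩
    · have h3 : (⟨0, a⟩ : Σ i : Fin 5, Fin (p i)) = ⟨0, b⟩ := Sum.inr.inj h2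
      simpa using h3
    · exact absurd h2 (by simp)
  have hinj1 : Function.Injective
      (fun x : Fin (p 1) => (s(Sum.inl 1, Sum.inr ⟨1, x⟩) : Sym2 (Fin 5 ⊕ Σ i : Fin 5, Fin (p i)))) := by
    intro a b hab
    simp only [Sym2.eq_iff] at hab
    rcases hab with ⟨-, h2⟩ | ⟨h2, -⟩
    · have h3 : (⟨1, a⟩ : Σ i : Fin 5, Fin (p i)) = ⟨1, b⟩ := Sum.inr.inj h2
      simpa using h3
    · exact absurd h2 (by simp)
  have hcard : S.card = p 0 + p 1 + 3 := by
    rw [show S = _ from rfl, Finset.card_union_of_disjoint, Finset.card_union_of_disjoint,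
      Finset.card_image_of_injective _ hinj0, Finset.card_image_of_injective _ hinj1,
      Finset.card_univ, Finset.card_univ, Fintype.card_fin, Fintype.card_fin]
    · have h3 : ({s(Sum.inl 0, Sum.inl 1), s(Sum.inl 0, Sum.inl 4), s(Sum.inl 1, Sum.inl 2)} :
          Finset (Sym2 (Fin 5 ⊕ Σ i : Fin 5, Fin (p i)))).card = 3 := by
        rw [Finset.card_insert_of_notMem (by simp [Sym2.eq_iff, Fin.ext_iff]; try decide),
          Finset.card_insert_of_notMem (by simp [Sym2.eq_iff, Fin.ext_iff]; try decide),
          Finset.card_singleton]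
      rw [h3]
    · rw [Finset.disjoint_left]
      intro a ha hb
      simp only [Finset.mem_image, Finset.mem_univ, true_and] at ha hb
      obtain ⟨x, rfl⟩ := ha
      obtain ⟨y, hy⟩ := hb
      simp only [Sym2.eq_iff] at hy
      rcases hy with ⟨h1, -⟩ | ⟨-, h2⟩
      · exact absurd (Sum.inl.inj h1) (by decide)
      · exact absurd h2 (by simp)
    · rw [Finset.disjoint_left]
      intro a ha hb
      simp only [Finset.mem_union, Finset.mem_image, Finset.mem_univ, true_and] at ha
      simp only [Finset.mem_insert, Finset.mem_singleton] at hb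
      rcases ha with ⟨x, rfl⟩ | ⟨x, rfl⟩ <;> rcases hb with hb | hb | hb <;>
        · simp only [Sym2.eq_iff] at hb
          rcases hb with ⟨-, h2⟩ | ⟨-, h2⟩ <;> exact absurd h2 (by simp)
  have hle : S.card ≤ (Finset.range m).card := by
    apply Finset.card_le_card_of_injOn c
    · intro e he
      exact Finset.mem_range.mpr (hbound e (hS e he).1)
    · intro e he f hf hcef
      by_contra hne
      exact hstrong e (hS e (by exact he)).1 f (hS f (by exact hf)).1 hne
        (hnearS e (by exact he) f (by exact hf)) hcef
  rw [hcard, Finset.card_range] at hle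
  exact hle

end
open Classical in
/-- The maximum of `d(u) + d(v)` over the edges `uv` of the cycle of `pufferGraph n p`. -/
noncomputable def maxCycleDegSum (n : ℕ) (p : Fin n → ℕ) : ℕ :=
  Finset.univ.sup fun q : Fin n × Fin n =>
    if (SimpleGraph.cycleGraph n).Adj q.1 q.2 then
      sdeg (pufferGraph n p) (Sum.inl q.1) + sdeg (pufferGraph n p) (Sum.inl q.2)
    else 0

/-- Consider a 5-cycle with vertices `u, v, x, y, z` in cyclic order (here the cycle vertices
`0, 1, 2, 3, 4` of `pufferGraph 5 p`), with at least 2 pendant edges at every cycle vertex and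
with the edge `uv` maximizing the degree sum over edges of the cycle. If
`d(u) + d(v) ≥ d(x) + d(y) + d(z) - 3` then the strong chromatic index equals
`d(u) + d(v) - 1`. -/
theorem sci_C5_heavy_pendants_eq (p : Fin 5 → ℕ) (hp : ∀ i, 2 ≤ p i)
    (hmax : ∀ i : Fin 5,
      sdeg (pufferGraph 5 p) (Sum.inl i) + sdeg (pufferGraph 5 p) (Sum.inl (i + 1)) ≤
        sdeg (pufferGraph 5 p) (Sum.inl 0) + sdeg (pufferGraph 5 p) (Sum.inl 1))
    (h : sdeg (pufferGraph 5 p) (Sum.inl 2) + sdeg (pufferGraph 5 p) (Sum.inl 3) +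
          sdeg (pufferGraph 5 p) (Sum.inl 4) - 3 ≤
        sdeg (pufferGraph 5 p) (Sum.inl 0) + sdeg (pufferGraph 5 p) (Sum.inl 1)) :
    sci (pufferGraph 5 p) =
      sdeg (pufferGraph 5 p) (Sum.inl 0) + sdeg (pufferGraph 5 p) (Sum.inl 1) - 1 := by
  have hd : ∀ i : Fin 5, sdeg (pufferGraph 5 p) (Sum.inl i) = p i + 2 := sdeg_inl p
  have h20 : p 2 ≤ p 0 := by
    have h1 := hmax 1
    simp only [hd] at h1; rw [show ((1 : Fin 5) + 1) = 2 from rfl] at h1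
    omega
  have h41 : p 4 ≤ p 1 := by
    have h1 := hmax 4
    simp only [hd] at h1; rw [show ((4 : Fin 5) + 1) = 0 from rfl] at h1
    omega
  have hsum : p 2 + p 3 + p 4 ≤ p 0 + p 1 + 1 := by
    simp only [hd] at h
    omega
  simp only [hd]
  have hk : (p 0 + 2) + (p 1 + 2) - 1 = p 0 + p 1 + 3 := by omega
  rw [hk]
  have hmem : (p 0 + p 1 + 3) ∈
      {k | ∃ c : Sym2 (Fin 5 ⊕ Σ i : Fin 5, Fin (p i)) → ℕ,
        IsStrongEdgeColoring (pufferGraph 5 p) k c} :=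
    ⟨scol p, scol_strong hp h20 h41 hsum⟩
  refine le_antisymm (Nat.sInf_le hmem) (le_csInf ⟨_, hmem⟩ ?_)
  intro m hm
  exact sci_lower hp hm
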